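/- Suppose t^n ≠ 1. Then the matrix I - P·Y^{-1} is invertible, and V := (I - P·Y^{-1})^{-1} satisfies (I - Y^{-1})·V = I - (I - P)·Y^{-1} and (I - P)·V = I - P. -/

import Mathlib

open Matrix

/-- If `t^n ≠ 1` then `I - P Y⁻¹` is invertible and `V := (I - P Y⁻¹)⁻¹` satisfies
`(I - Y⁻¹) V = I - (I - P) Y⁻¹` and `(I - P) V = I - P`. -/
theorem stmt_9 (m n : ℕ) (hm : 1 < m) (hn : 1 < n) (hmn : Nat.Coprime m n)
    (t : ℂ) (ht0 : t ≠ 0) (htn : t ^ n ≠ 1)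
    (b : Fin m → ℤ) (hb : (n : ℤ) ∣ ∑ i, b i)
    (a : ℤ) (ha : ¬ (n : ℤ) ∣ a)
    (Y P V : Matrix (Fin m) (Fin m) ℂ)
    (hY : Y = t • Matrix.diagonal
      (fun i => Complex.exp (2 * (Real.pi : ℂ) * Complex.I * (b i : ℂ) / (n : ℂ))))
    (hP : P = Matrix.diagonal (fun i => if (n : ℤ) ∣ (b i + a) then 0 else 1))
    (hV : V = (1 - P * Y⁻¹)⁻¹) :
    IsUnit (1 - P * Y⁻¹) ∧
    (1 - Y⁻¹) * V = 1 - (1 - P) * Y⁻¹ ∧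
    (1 - P) * V = 1 - P := by
  have hn0 : (n : ℂ) ≠ 0 := Nat.cast_ne_zero.mpr (by omega)
  set e : Fin m → ℂ :=
    fun i => Complex.exp (2 * (Real.pi : ℂ) * Complex.I * (b i : ℂ) / (n : ℂ)) with he
  have he0 : ∀ i, e i ≠ 0 := fun i => Complex.exp_ne_zero _
  have hen : ∀ i, (e i) ^ n = 1 := by
    intro i
    rw [he]
    rw [← Complex.exp_nat_mul]
    have : (n : ℂ) * (2 * (Real.pi : ℂ) * Complex.I * (b i : ℂ) / (n : ℂ))
        = (b i : ℂ) * (2 * Real.pi * Complex.I) := by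
      field_simp
    rw [this, Complex.exp_int_mul_two_pi_mul_I]
  have hte : ∀ i, t * e i ≠ 0 := fun i => mul_ne_zero ht0 (he0 i)
  have hte1 : ∀ i, t * e i ≠ 1 := by
    intro i h
    apply htn
    have := congrArg (· ^ n) h
    simp only [mul_pow, hen i, mul_one, one_pow] at this
    exact this
  set f : Fin m → ℂ := fun i => if (n : ℤ) ∣ (b i + a) then 0 else 1 with hf
  have hY' : Y = diagonal (fun i => t * e i) := by
    rw [hY]
    rw [show (fun i => t * e i) = t • e from rfl, diagonal_smul]
  have hYinv : Y⁻¹ = diagonal (fun i => (t * e i)⁻¹) := by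
    apply Matrix.inv_eq_right_inv
    rw [hY', diagonal_mul_diagonal]
    rw [← diagonal_one]
    exact congrArg diagonal (funext fun i => mul_inv_cancel₀ (hte i))
  set g : Fin m → ℂ := fun i => 1 - f i * (t * e i)⁻¹ with hg
  have hmat : 1 - P * Y⁻¹ = diagonal g := by
    rw [hP, hYinv, diagonal_mul_diagonal, ← diagonal_one, diagonal_sub]
  have hg0 : ∀ i, g i ≠ 0 := by
    intro i
    simp only [hg, hf]
    split
    · simp
    · rw [one_mul, sub_ne_zero]
      intro h
      exact hte1 i (inv_eq_one.mp h.symm)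
  have hunit : IsUnit (1 - P * Y⁻¹) := by
    rw [hmat, Matrix.isUnit_iff_isUnit_det, det_diagonal, isUnit_iff_ne_zero]
    exact Finset.prod_ne_zero_iff.mpr fun i _ => hg0 i
  have hV' : V = diagonal (fun i => (g i)⁻¹) := by
    rw [hV, hmat]
    apply Matrix.inv_eq_right_inv
    rw [diagonal_mul_diagonal, ← diagonal_one]
    exact congrArg diagonal (funext fun i => mul_inv_cancel₀ (hg0 i))
  refine ⟨hunit, ?_, ?_⟩
  · rw [hV', hYinv, hP, ← diagonal_one]
    simp only [diagonal_sub, diagonal_mul_diagonal]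
    refine congrArg diagonal (funext fun i => ?_)
    simp only [hg, hf]
    split
    · simp
    · rw [one_mul, mul_inv_cancel₀]
      · have h1 : (1 : ℂ) - (t * e i)⁻¹ ≠ 0 := by
          rw [sub_ne_zero]
          intro h
          exact hte1 i (inv_eq_one.mp h.symm)
        field_simp
        simp
      · rw [sub_ne_zero]
        intro h
        exact hte1 i (inv_eq_one.mp h.symm)
  · rw [hV', hP, ← diagonal_one]
    simp only [diagonal_sub, diagonal_mul_diagonal]
    refine congrArg diagonal (funext fun i => ?_)
    simp only [hg, hf]
    split
    · simp
    · simp
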